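/- Let V be a real uniformly convex Banach space and J : V → ℝ a C¹ functional. Suppose there exist ε > 0 and γ_ε ∈ 𝒫 such that for every γ ∈ 𝒫, max_{t∈[0,1]} J(γ(t)) ≥ max_{t∈[0,1]} J(γ_ε(t)) − √ε · d(γ, γ_ε). Set T_ε = { t̃ ∈ [0,1] : J(γ_ε(t̃)) = max_{t∈[0,1]} J(γ_ε(t)) }. If T_ε is contained in a compact subset of the open interval (0,1), then there exists t_ε ∈ T_ε such that ‖J′_{γ_ε(t_ε)}‖_* ≤ √ε, where J′_x ∈ V* is the Fréchet derivative of J at x and ‖·‖_* is the dual norm on V*. -/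

import Mathlib

open Set unitInterval

/-- **Lemma 5.3 (grad-D).** Let `V` be a real uniformly convex Banach space and
`J : V → ℝ` a `C¹` functional. Fix two distinct points `P₁ ≠ P₂` of `V` and let `𝒫`
be the space of continuous paths `γ : [0,1] → V` with `γ 0 = P₁`, `γ 1 = P₂`, with the
sup metric `d`.  Suppose there are `ε > 0` and `γε ∈ 𝒫` such that for all `γ ∈ 𝒫`,
`max J∘γ ≥ max J∘γε − √ε ⬝ d(γ, γε)`.  If the set `Tε` of maximizers of `J ∘ γε` is
contained in a compact subset of the open interval `(0,1)`, then there is `tε ∈ Tε`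
with `‖J'(γε tε)‖ ≤ √ε`. -/
theorem mountain_pass_gradient_bound
    {V : Type*} [NormedAddCommGroup V] [NormedSpace ℝ V] [CompleteSpace V]
    [UniformConvexSpace V]
    (J : V → ℝ) (hJ : ContDiff ℝ 1 J)
    (P₁ P₂ : V) (hP : P₁ ≠ P₂)
    (ε : ℝ) (hε : 0 < ε)
    (γε : C(unitInterval, V)) (hγε0 : γε 0 = P₁) (hγε1 : γε 1 = P₂)
    (hmin : ∀ γ : C(unitInterval, V), γ 0 = P₁ → γ 1 = P₂ →
      (⨆ t : unitInterval, J (γε t)) - Real.sqrt ε * dist γ γε ≤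
        ⨆ t : unitInterval, J (γ t))
    (hT : ∃ K : Set unitInterval, IsCompact K ∧ (∀ t ∈ K, (t : ℝ) ∈ Ioo (0:ℝ) 1) ∧
      {t : unitInterval | J (γε t) = ⨆ s : unitInterval, J (γε s)} ⊆ K) :
    ∃ tε : unitInterval, J (γε tε) = (⨆ s : unitInterval, J (γε s)) ∧
      ‖fderiv ℝ J (γε tε)‖ ≤ Real.sqrt ε := by
  classical
  set M : ℝ := ⨆ s : unitInterval, J (γε s) with hMdef
  have hJc : Continuous J := hJ.continuous
  have hcont : Continuous fun s : unitInterval => J (γε s) := hJc.comp γε.continuous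
  obtain ⟨t₀, -, ht₀⟩ :=
    isCompact_univ.exists_isMaxOn univ_nonempty hcont.continuousOn
  have hbdd : BddAbove (range fun s : unitInterval => J (γε s)) := by
    have := isCompact_univ.bddAbove_image hcont.continuousOn
    rwa [image_univ] at this
  have hMle : ∀ s, J (γε s) ≤ M := fun s => le_ciSup hbdd s
  have hMt₀ : J (γε t₀) = M :=
    le_antisymm (hMle t₀) (ciSup_le fun s => (isMaxOn_iff.1 ht₀) s (mem_univ s))
  by_contra hcon
  push_neg at hcon
  set Tε : Set unitInterval := {t | J (γε t) = M} with hTεdef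
  have hTne : Tε.Nonempty := ⟨t₀, hMt₀⟩
  have hTclosed : IsClosed Tε := isClosed_eq hcont continuous_const
  have hTcomp : IsCompact Tε := hTclosed.isCompact
  obtain ⟨K, hKcomp, hKIoo, hTK⟩ := hT
  have hgrad : ∀ t ∈ Tε, Real.sqrt ε < ‖fderiv ℝ J (γε t)‖ := fun t ht => hcon t ht
  -- choose directions
  have hv : ∀ t ∈ Tε, ∃ w : V, ‖w‖ ≤ 1 ∧ Real.sqrt ε < fderiv ℝ J (γε t) w := by
    intro t ht
    obtain ⟨x, hx1, hx2⟩ :=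
      (fderiv ℝ J (γε t)).exists_lt_apply_of_lt_opNorm (hgrad t ht)
    rcases le_or_gt 0 (fderiv ℝ J (γε t) x) with h | h
    · exact ⟨x, hx1.le, by rwa [Real.norm_eq_abs, abs_of_nonneg h] at hx2⟩
    · refine ⟨-x, by simpa using hx1.le, ?_⟩
      rw [map_neg]
      rwa [Real.norm_eq_abs, abs_of_neg h] at hx2
  choose! v hv1 hv2 using hv
  have hacont : ∀ i : unitInterval,
      Continuous fun s : unitInterval => fderiv ℝ J (γε s) (v i) := fun i =>
    Continuous.clm_apply ((hJ.continuous_fderiv one_ne_zero).comp γε.continuous)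
      continuous_const
  set U : unitInterval → Set unitInterval :=
    fun i => {s | Real.sqrt ε < fderiv ℝ J (γε s) (v i)} with hUdef
  have hUopen : ∀ i, IsOpen (U i) := fun i =>
    isOpen_lt continuous_const (hacont i)
  have hcover : Tε ⊆ ⋃ i ∈ Tε, U i := fun t ht => mem_biUnion ht (hv2 t ht)
  obtain ⟨sf, hsT, hsfin, hscov⟩ :=
    hTcomp.elim_finite_subcover_image (fun i _ => hUopen i) hcover
  set F : Finset unitInterval := hsfin.toFinset with hFdef
  have hFmem : ∀ i ∈ F, i ∈ Tε := fun i hi => hsT (hsfin.mem_toFinset.1 hi)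
  set ψ : unitInterval → unitInterval → ℝ :=
    fun i s => max (fderiv ℝ J (γε s) (v i) - Real.sqrt ε) 0 with hψdef
  have hψcont : ∀ i, Continuous (ψ i) := fun i =>
    ((hacont i).sub continuous_const).max continuous_const
  have hψnn : ∀ i s, 0 ≤ ψ i s := fun i s => le_max_right _ _
  set q : unitInterval → ℝ := fun s => ∑ i ∈ F, ψ i s with hqdef
  have hqcont : Continuous q := continuous_finset_sum _ fun i _ => hψcont i
  have hqnn : ∀ s, 0 ≤ q s := fun s => Finset.sum_nonneg fun i _ => hψnn i s
  have hqpos : ∀ t ∈ Tε, 0 < q t := by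
    intro t ht
    obtain ⟨i, hi, hiU⟩ := mem_iUnion₂.1 (hscov ht)
    have h1 : 0 < ψ i t := lt_max_iff.2 (Or.inl (sub_pos.2 hiU))
    exact h1.trans_le
      (Finset.single_le_sum (fun j _ => hψnn j t) (hsfin.mem_toFinset.2 hi))
  have hkey : ∀ i s, ψ i s * fderiv ℝ J (γε s) (v i)
      = ψ i s * Real.sqrt ε + (ψ i s) ^ 2 := by
    intro i s
    rcases le_or_gt (fderiv ℝ J (γε s) (v i)) (Real.sqrt ε) with h | h
    · have h0 : ψ i s = 0 := max_eq_right (sub_nonpos.2 h)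
      simp [h0]
    · have h0 : ψ i s = fderiv ℝ J (γε s) (v i) - Real.sqrt ε :=
        max_eq_left (sub_nonneg.2 h.le)
      rw [h0]; ring
  -- cutoff
  set O : Set unitInterval := {t | 0 < q t} ∩ {t | (t : ℝ) ∈ Ioo (0:ℝ) 1} with hOdef
  have hOopen : IsOpen O :=
    (isOpen_lt continuous_const hqcont).inter
      (isOpen_Ioo.preimage continuous_subtype_val)
  have hTO : Tε ⊆ O := fun t ht => ⟨hqpos t ht, hKIoo t (hTK ht)⟩
  obtain ⟨δ, hδ, hthick⟩ := hTcomp.exists_thickening_subset_open hOopen hTO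
  set φ : unitInterval → ℝ :=
    fun t => max (1 - 2 / δ * Metric.infDist t Tε) 0 with hφdef
  have hφcont : Continuous φ :=
    (continuous_const.sub (continuous_const.mul (Metric.continuous_infDist_pt Tε))).max
      continuous_const
  have hφnn : ∀ t, 0 ≤ φ t := fun t => le_max_right _ _
  have hφle : ∀ t, φ t ≤ 1 := fun t =>
    max_le (by
      have h1 : 0 ≤ 2 / δ * Metric.infDist t Tε :=
        mul_nonneg (div_nonneg (by norm_num) hδ.le) Metric.infDist_nonneg
      linarith) one_pos.le
  have hφone : ∀ t ∈ Tε, φ t = 1 := by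
    intro t ht
    simp [hφdef, Metric.infDist_zero_of_mem ht]
  have hφzero : ∀ t, δ / 2 ≤ Metric.infDist t Tε → φ t = 0 := by
    intro t h
    apply max_eq_right
    have h1 : 2 / δ * (δ / 2) ≤ 2 / δ * Metric.infDist t Tε :=
      mul_le_mul_of_nonneg_left h (by positivity)
    have h2 : 2 / δ * (δ / 2) = 1 := by field_simp
    linarith
  have hq0 : ∀ t, q t = 0 → δ ≤ Metric.infDist t Tε := by
    intro t h
    by_contra hlt
    push_neg at hlt
    have hmem : t ∈ Metric.thickening δ Tε := (Metric.mem_thickening_iff_infDist_lt hTne).2 hlt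
    have := (hthick hmem).1
    rw [mem_setOf_eq, h] at this
    exact lt_irrefl 0 this
  have hφq : ∀ t, q t = 0 → φ t = 0 := fun t h => hφzero t (by linarith [hq0 t h])
  -- vector field
  set X : unitInterval → V :=
    fun t => (φ t / q t) • ∑ i ∈ F, ψ i t • v i with hXdef
  have hSnorm : ∀ t, ‖∑ i ∈ F, ψ i t • v i‖ ≤ q t := by
    intro t
    calc ‖∑ i ∈ F, ψ i t • v i‖ ≤ ∑ i ∈ F, ‖ψ i t • v i‖ := norm_sum_le _ _
    _ ≤ ∑ i ∈ F, ψ i t := by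
        apply Finset.sum_le_sum
        intro i hi
        rw [norm_smul, Real.norm_eq_abs, abs_of_nonneg (hψnn i t)]
        exact mul_le_of_le_one_right (hψnn i t) (hv1 i (hFmem i hi))
  have hX0 : ∀ t, φ t = 0 → X t = 0 := by
    intro t h; simp [hXdef, h]
  have hXnorm : ∀ t, ‖X t‖ ≤ 1 := by
    intro t
    rcases eq_or_lt_of_le (hqnn t) with h | h
    · rw [hX0 t (hφq t h.symm)]; simp
    · rw [hXdef, norm_smul, Real.norm_eq_abs,
        abs_of_nonneg (div_nonneg (hφnn t) (hqnn t))]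
      calc φ t / q t * ‖∑ i ∈ F, ψ i t • v i‖ ≤ φ t / q t * q t :=
            mul_le_mul_of_nonneg_left (hSnorm t) (div_nonneg (hφnn t) (hqnn t))
      _ = φ t := div_mul_cancel₀ _ h.ne'
      _ ≤ 1 := hφle t
  have hsumcont : Continuous fun t => ∑ i ∈ F, ψ i t • v i :=
    continuous_finset_sum _ fun i _ => (hψcont i).smul continuous_const
  have hXcont : Continuous X := by
    rw [continuous_iff_continuousAt]
    intro t
    rcases lt_or_ge (Metric.infDist t Tε) δ with h | h
    · have hqt : 0 < q t :=
        (hthick ((Metric.mem_thickening_iff_infDist_lt hTne).2 h)).1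
      exact ((hφcont.continuousAt.div hqcont.continuousAt hqt.ne').smul
        hsumcont.continuousAt)
    · have hW : {s : unitInterval | δ / 2 < Metric.infDist s Tε} ∈ nhds t := by
        apply (isOpen_lt continuous_const (Metric.continuous_infDist_pt Tε)).mem_nhds
        show δ / 2 < Metric.infDist t Tε
        linarith
      have heq : X =ᶠ[nhds t] fun _ => (0 : V) :=
        Filter.eventuallyEq_of_mem hW fun s hs => hX0 s (hφzero s (le_of_lt hs))
      exact continuousAt_const.congr heq.symm
  -- the pairing is large on Tε
  have hpair : ∀ t, 0 < q t → φ t = 1 →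
      Real.sqrt ε < fderiv ℝ J (γε t) (X t) := by
    intro t hq hφ1
    have hval : fderiv ℝ J (γε t) (X t)
        = (φ t / q t) * ∑ i ∈ F, ψ i t * fderiv ℝ J (γε t) (v i) := by
      rw [hXdef, map_smul, map_sum, smul_eq_mul]
      congr 1
      exact Finset.sum_congr rfl fun i _ => by rw [map_smul, smul_eq_mul]
    obtain ⟨i, hiF, hipos⟩ : ∃ i ∈ F, 0 < ψ i t := by
      by_contra hno
      push_neg at hno
      have h1 : q t ≤ 0 := Finset.sum_nonpos fun i hi => hno i hi
      linarith
    have hsq : 0 < ∑ i ∈ F, (ψ i t) ^ 2 :=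
      lt_of_lt_of_le (by positivity)
        (Finset.single_le_sum (fun j _ => sq_nonneg (ψ j t)) hiF)
    have hsum : ∑ i ∈ F, ψ i t * fderiv ℝ J (γε t) (v i)
        = q t * Real.sqrt ε + ∑ i ∈ F, (ψ i t) ^ 2 := by
      rw [Finset.sum_congr rfl fun i _ => hkey i t, Finset.sum_add_distrib,
        hqdef, Finset.sum_mul]
    rw [hval, hφ1, hsum, one_div_mul_eq_div, lt_div_iff₀ hq]
    nlinarith [Real.sqrt_nonneg ε]
  have hXTε : ∀ t ∈ Tε, Real.sqrt ε < fderiv ℝ J (γε t) (X t) := fun t ht =>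
    hpair t (hqpos t ht) (hφone t ht)
  -- margin
  have hGcont : Continuous fun t : unitInterval => fderiv ℝ J (γε t) (X t) :=
    Continuous.clm_apply ((hJ.continuous_fderiv one_ne_zero).comp γε.continuous) hXcont
  obtain ⟨tm, htmT, htm⟩ := hTcomp.exists_isMinOn hTne hGcont.continuousOn
  set ρ : ℝ := (fderiv ℝ J (γε tm) (X tm) - Real.sqrt ε) / 2 with hρdef
  have hρpos : 0 < ρ := div_pos (sub_pos.2 (hXTε tm htmT)) two_pos
  -- tube lemma
  set H : unitInterval × ℝ → ℝ :=
    fun p => fderiv ℝ J (γε p.1 - p.2 • X p.1) (X p.1) with hHdef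
  have hHcont : Continuous H := by
    apply Continuous.clm_apply
    · exact (hJ.continuous_fderiv one_ne_zero).comp
        (((γε.continuous.comp continuous_fst).sub
          (continuous_snd.smul (hXcont.comp continuous_fst))))
    · exact hXcont.comp continuous_fst
  have hAopen : IsOpen {p : unitInterval × ℝ | Real.sqrt ε + ρ < H p} :=
    isOpen_lt continuous_const hHcont
  have hTA : Tε ×ˢ ({0} : Set ℝ) ⊆ {p | Real.sqrt ε + ρ < H p} := by
    rintro ⟨t, τ'⟩ ⟨ht, hτ'⟩
    simp only [mem_singleton_iff] at hτ'
    subst hτ'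
    have hH0 : H (t, 0) = fderiv ℝ J (γε t) (X t) := by
      rw [hHdef]; simp
    rw [mem_setOf_eq, hH0]
    have h1 := (isMinOn_iff.1 htm) t ht
    linarith [hXTε tm htmT]
  obtain ⟨u, w, huo, hwo, hTu, h0w, huw⟩ :=
    generalized_tube_lemma hTcomp isCompact_singleton hAopen hTA
  obtain ⟨r, hr, hball⟩ := Metric.isOpen_iff.1 hwo 0 (h0w rfl)
  -- bound away from u
  obtain ⟨M', hM'lt, hM'le⟩ :
      ∃ M' : ℝ, M' < M ∧ ∀ t : unitInterval, t ∉ u → J (γε t) ≤ M' := by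
    rcases eq_empty_or_nonempty uᶜ with h | h
    · exact ⟨M - 1, by linarith, fun t ht =>
        absurd (h ▸ (mem_compl ht)) (notMem_empty t)⟩
    · have hucomp : IsCompact uᶜ := huo.isClosed_compl.isCompact
      obtain ⟨t₁, ht₁mem, ht₁⟩ := hucomp.exists_isMaxOn h hcont.continuousOn
      refine ⟨J (γε t₁), ?_, fun t ht => (isMaxOn_iff.1 ht₁) t (mem_compl ht)⟩
      have hnt : t₁ ∉ Tε := fun hmem => ht₁mem (hTu hmem)
      exact lt_of_le_of_ne (hMle t₁) fun heq => hnt heq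
  -- uniform bound on |H|
  have hScomp : IsCompact ((univ : Set unitInterval) ×ˢ Icc (0:ℝ) 1) :=
    isCompact_univ.prod isCompact_Icc
  have hSne : ((univ : Set unitInterval) ×ˢ Icc (0:ℝ) 1).Nonempty :=
    ⟨(t₀, 0), mem_univ _, by norm_num⟩
  obtain ⟨pL, -, hpL⟩ :=
    hScomp.exists_isMaxOn hSne (continuous_abs.comp hHcont).continuousOn
  set L : ℝ := |H pL| with hLdef
  have hL0 : 0 ≤ L := abs_nonneg _
  have hLbd : ∀ t : unitInterval, ∀ sg ∈ Icc (0:ℝ) 1, |H (t, sg)| ≤ L :=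
    fun t sg hsg => (isMaxOn_iff.1 hpL) (t, sg) ⟨mem_univ _, hsg⟩
  -- choose τ
  have hMM' : 0 < M - M' := by linarith
  set τ : ℝ := min (min (r / 2) 1) ((M - M') / (2 * (L + Real.sqrt ε + 1)))
    with hτdef
  have hτpos : 0 < τ :=
    lt_min (lt_min (by linarith) one_pos) (by positivity)
  have hτr : τ ≤ r / 2 := le_trans (min_le_left _ _) (min_le_left _ _)
  have hτ1 : τ ≤ 1 := le_trans (min_le_left _ _) (min_le_right _ _)
  have hτM : τ * (L + Real.sqrt ε) ≤ (M - M') / 2 := by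
    have h1 : τ ≤ (M - M') / (2 * (L + Real.sqrt ε + 1)) := min_le_right _ _
    have h2 : (0:ℝ) < L + Real.sqrt ε + 1 := by positivity
    have h3 : τ * (L + Real.sqrt ε + 1)
        ≤ (M - M') / (2 * (L + Real.sqrt ε + 1)) * (L + Real.sqrt ε + 1) :=
      mul_le_mul_of_nonneg_right h1 h2.le
    have h4 : (M - M') / (2 * (L + Real.sqrt ε + 1)) * (L + Real.sqrt ε + 1)
        = (M - M') / 2 := by field_simp
    nlinarith [hτpos]
  -- the deformed path
  set γτ : C(unitInterval, V) :=
    ⟨fun t => γε t - τ • X t, γε.continuous.sub (hXcont.const_smul τ)⟩ with hγτdef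
  have hend0 : (0 : unitInterval) ∉ Metric.thickening δ Tε := by
    intro hmem
    have := (hthick hmem).2
    simp only [mem_setOf_eq, Icc.coe_zero] at this
    exact lt_irrefl (0:ℝ) this.1
  have hend1 : (1 : unitInterval) ∉ Metric.thickening δ Tε := by
    intro hmem
    have := (hthick hmem).2
    simp only [mem_setOf_eq, Icc.coe_one] at this
    exact lt_irrefl (1:ℝ) this.2
  have hφ0 : φ 0 = 0 := by
    apply hφzero
    have h1 : ¬ Metric.infDist (0 : unitInterval) Tε < δ := fun h =>
      hend0 ((Metric.mem_thickening_iff_infDist_lt hTne).2 h)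
    linarith [not_lt.1 h1]
  have hφ1 : φ 1 = 0 := by
    apply hφzero
    have h1 : ¬ Metric.infDist (1 : unitInterval) Tε < δ := fun h =>
      hend1 ((Metric.mem_thickening_iff_infDist_lt hTne).2 h)
    linarith [not_lt.1 h1]
  have hγτ0 : γτ 0 = P₁ := by
    rw [hγτdef]
    simp [ContinuousMap.coe_mk, hX0 0 hφ0, hγε0]
  have hγτ1 : γτ 1 = P₂ := by
    rw [hγτdef]
    simp [ContinuousMap.coe_mk, hX0 1 hφ1, hγε1]
  -- derivative along deformation
  have hderiv : ∀ (t : unitInterval) (sg : ℝ),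
      HasDerivAt (fun τ' : ℝ => J (γε t - τ' • X t)) (-(H (t, sg))) sg := by
    intro t sg
    have h1 : HasDerivAt (fun τ' : ℝ => γε t - τ' • X t) (-(X t)) sg := by
      simpa using ((hasDerivAt_id sg).smul_const (X t)).const_sub (γε t)
    have h2 := (hJ.differentiable one_ne_zero (γε t - sg • X t)).hasFDerivAt
    have h3 := h2.comp_hasDerivAt sg h1
    simp only [hHdef]
    rw [map_neg] at h3
    exact h3
  -- pointwise bound for the deformed path
  set η : ℝ := min (τ * ρ) ((M - M') / 2) with hηdef
  have hηpos : 0 < η := lt_min (by positivity) (by linarith)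
  have hbound : ∀ t : unitInterval, J (γτ t) ≤ M - Real.sqrt ε * τ - η := by
    intro t
    obtain ⟨sg, hsg, hslope⟩ :=
      exists_hasDerivAt_eq_slope (fun τ' : ℝ => J (γε t - τ' • X t))
        (fun sg => -(H (t, sg))) hτpos
        ((hJc.comp (continuous_const.sub (continuous_id.smul
          continuous_const))).continuousOn)
        (fun sg _ => hderiv t sg)
    rw [eq_div_iff (sub_ne_zero.2 hτpos.ne')] at hslope
    simp only [zero_smul, sub_zero] at hslope
    have hfτ : J (γε t - τ • X t) = J (γε t) - τ * H (t, sg) := by linarith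
    have hγτt : γτ t = γε t - τ • X t := rfl
    rw [hγτt, hfτ]
    have hsg1 : sg ∈ Icc (0:ℝ) 1 := ⟨hsg.1.le, hsg.2.le.trans hτ1⟩
    by_cases htu : t ∈ u
    · have hsgw : sg ∈ w := hball (by
        rw [Metric.mem_ball, Real.dist_eq, sub_zero, abs_of_nonneg hsg.1.le]
        linarith [hsg.2])
      have hHsg : Real.sqrt ε + ρ < H (t, sg) := huw ⟨htu, hsgw⟩
      have h1 : J (γε t) ≤ M := hMle t
      have h2 : η ≤ τ * ρ := min_le_left _ _
      have h4 : τ * (Real.sqrt ε + ρ) ≤ τ * H (t, sg) :=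
        mul_le_mul_of_nonneg_left hHsg.le hτpos.le
      have h5 : τ * (Real.sqrt ε + ρ) = Real.sqrt ε * τ + τ * ρ := by ring
      linarith
    · have h1 : J (γε t) ≤ M' := hM'le t htu
      have h2 : -(H (t, sg)) ≤ L := by
        have := hLbd t sg hsg1
        rw [abs_le] at this
        linarith [this.1]
      have h3 : η ≤ (M - M') / 2 := min_le_right _ _
      have h4 : τ * -(H (t, sg)) ≤ τ * L :=
        mul_le_mul_of_nonneg_left h2 hτpos.le
      have h5 : τ * (L + Real.sqrt ε) = τ * L + Real.sqrt ε * τ := by ring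
      have h6 : τ * -(H (t, sg)) = -(τ * H (t, sg)) := by ring
      linarith
  have hsup : (⨆ t : unitInterval, J (γτ t)) ≤ M - Real.sqrt ε * τ - η :=
    ciSup_le hbound
  have hd : dist γτ γε ≤ τ := by
    rw [ContinuousMap.dist_le hτpos.le]
    intro t
    have hγτt : γτ t = γε t - τ • X t := rfl
    rw [hγτt, dist_eq_norm]
    have h1 : γε t - τ • X t - γε t = -(τ • X t) := by abel
    rw [h1, norm_neg, norm_smul, Real.norm_eq_abs, abs_of_nonneg hτpos.le]
    calc τ * ‖X t‖ ≤ τ * 1 := mul_le_mul_of_nonneg_left (hXnorm t) hτpos.le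
    _ = τ := mul_one τ
  have hmin' := hmin γτ hγτ0 hγτ1
  have hde : Real.sqrt ε * dist γτ γε ≤ Real.sqrt ε * τ :=
    mul_le_mul_of_nonneg_left hd (Real.sqrt_nonneg ε)
  linarith
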